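/- (Stationary-measure moment bound, core of Theorem 3.) Let m ≠ n be nonnegative integers, λ ∈ ℂ with Im λ ≥ 0, s ∈ ℍ, p ∈ (0,1), ε ∈ (0,1), ν a Borel probability measure on ℝ, and K ⊂ ℍ × ℍ a compact set. Suppose: (i) for every (z_1, z_2) ∈ (ℍ × ℍ) \ K, ∫_{ℝ^M} μ_p(z_1, z_2, q, λ) dν^{⊗M}(q) ≤ 1 − ε; (ii) C := sup_{(z_1,z_2) ∈ K} (1/2)∫_{ℝ^M} [w_s(φ(z_1,z_2,q,λ))^{1+p} + w_s(φ(z_2,z_1,q,λ))^{1+p}] dν^{⊗M}(q) < ∞; (iii) ρ is a Borel probability measure on ℍ with ∫_ℍ w_s(z)^{1+p} dρ(z) < ∞ satisfying the stationarity equation ∫_ℍ w_s(z)^{1+p} dρ(z) = ∫_{ℍ×ℍ×ℝ^M} w_s(φ(z_1, z_2, q, λ))^{1+p} dρ(z_1) dρ(z_2) dν^{⊗M}(q). Then ∫_ℍ w_s(z)^{1+p} dρ(z) ≤ C/ε. -/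

import Mathlib

open Complex MeasureTheory

noncomputable section

/-- The iterated map `φ_j(z, q_1,…,q_j, λ)`: `φ_0 = z`,
`φ_j = −1/(φ_{j−1} + λ − q_j + 1)`, where `q_j` is `q (j-1)`. -/
def phiIter (lam : ℂ) (q : ℕ → ℝ) : ℕ → ℂ → ℂ
  | 0, z => z
  | (j+1), z => -1 / (phiIter lam q j z + lam - (q j : ℂ) + 1)

/-- `φ(z₁, z₂, q_1,…,q_M, λ)` with `M = m+n+1`:
`z₁` passes through the `n`-chain with `q_1,…,q_n`, `z₂` through the `m`-chain with
`q_{n+1},…,q_{n+m}`, and `q_M = q (n+m)`. -/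
def phiMap (m n : ℕ) (lam : ℂ) (q : ℕ → ℝ) (z₁ z₂ : ℂ) : ℂ :=
  -1 / (phiIter lam q n z₁ + phiIter lam (fun i => q (n + i)) m z₂ + lam - (q (n + m) : ℂ))

/-- The weight based at `s`: `w_s(z) = |z−s|²/(Im z · Im s)`. -/
def wt (s z : ℂ) : ℝ := ‖z - s‖ ^ 2 / (z.im * s.im)

/-- `μ_p(z₁, z₂, q, λ)`, computed with the weight based at `s`. -/
def muP (m n : ℕ) (p : ℝ) (s lam : ℂ) (q : ℕ → ℝ) (z₁ z₂ : ℂ) : ℝ :=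
  (wt s (phiMap m n lam q z₁ z₂) ^ (1 + p) + wt s (phiMap m n lam q z₂ z₁) ^ (1 + p)) /
    (wt s z₁ ^ (1 + p) + wt s z₂ ^ (1 + p))

/-- The linear polynomials `R_k(z)`: `R_0 = 1`, `R_1 = 1+λ+z`,
`R_{k+1} = (1+λ)R_k − R_{k−1}`, as functions of `z`. -/
def Rfun (lam : ℂ) : ℕ → ℂ → ℂ
  | 0, _ => 1
  | 1, z => 1 + lam + z
  | (k+2), z => (1 + lam) * Rfun lam (k+1) z - Rfun lam k z

/-- `λ` (with associated fixed point `zlam = Z(λ)`) is nondegenerate: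
(a) `R_m, R_n` have no common real zero and their `z`-coefficients do not both vanish;
(b) `R_n(zlam)/R_m(zlam)` is neither real nor purely imaginary. -/
def Nondeg (m n : ℕ) (lam zlam : ℂ) : Prop :=
  (¬ ∃ x : ℝ, Rfun lam m x = 0 ∧ Rfun lam n x = 0) ∧
  (¬ ((Rfun lam m 1 - Rfun lam m 0 = 0) ∧ (Rfun lam n 1 - Rfun lam n 0 = 0))) ∧
  (Rfun lam n zlam / Rfun lam m zlam).im ≠ 0 ∧
  (Rfun lam n zlam / Rfun lam m zlam).re ≠ 0

/-- The strip `R(E,ε) = {λ : Re λ ∈ E, 0 < Im λ ≤ ε}`. -/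
def strip (E : Set ℝ) (ε : ℝ) : Set ℂ := {lam : ℂ | lam.re ∈ E ∧ 0 < lam.im ∧ lam.im ≤ ε}

/-- The closed strip `{λ : Re λ ∈ E, 0 ≤ Im λ ≤ ε}` (domain of `Z`). -/
def closedStrip (E : Set ℝ) (ε : ℝ) : Set ℂ :=
  {lam : ℂ | lam.re ∈ E ∧ 0 ≤ lam.im ∧ lam.im ≤ ε}


open MeasureTheory
open scoped ENNReal

/-- Extension of a vector `q ∈ ℝ^M` to a sequence (by `0`), to feed into `phiMap`. -/
def extQ (M : ℕ) (q : Fin M → ℝ) : ℕ → ℝ := fun i => if h : i < M then q ⟨i, h⟩ else 0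

open Filter Topology

set_option maxHeartbeats 1000000

lemma aux_neg_inv_im {d : ℂ} (hd : 0 < d.im) : 0 < (-1 / d).im := by
  have hd0 : d ≠ 0 := fun h => by simp [h] at hd
  have : (-1 / d) = -(d⁻¹) := by field_simp
  rw [this]
  simp only [Complex.neg_im, Complex.inv_im, neg_div, neg_neg]
  exact div_pos hd (Complex.normSq_pos.mpr hd0)

lemma aux_phiIter_im (lam : ℂ) (hlam : 0 ≤ lam.im) (q : ℕ → ℝ) :
    ∀ (j : ℕ) {z : ℂ}, 0 < z.im → 0 < (phiIter lam q j z).im := by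
  intro j
  induction j with
  | zero => intro z hz; exact hz
  | succ j ih =>
    intro z hz
    apply aux_neg_inv_im
    simp only [Complex.add_im, Complex.sub_im, Complex.ofReal_im, Complex.one_im]
    have := ih hz
    linarith

lemma aux_phiIter_contAt (lam : ℂ) (hlam : 0 ≤ lam.im) (q : ℕ → ℝ) :
    ∀ (j : ℕ) {z : ℂ}, 0 < z.im → ContinuousAt (phiIter lam q j) z := by
  intro j
  induction j with
  | zero => intro z hz; exact continuousAt_id
  | succ j ih =>
    intro z hz
    have hden : (phiIter lam q j z + lam - (q j : ℂ) + 1) ≠ 0 := by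
      intro h
      have h1 : 0 < (phiIter lam q j z + lam - (q j : ℂ) + 1).im := by
        simp only [Complex.add_im, Complex.sub_im, Complex.ofReal_im, Complex.one_im]
        have := aux_phiIter_im lam hlam q j hz
        linarith
      rw [h] at h1; simp at h1
    show ContinuousAt (fun z => -1 / (phiIter lam q j z + lam - (q j : ℂ) + 1)) z
    exact continuousAt_const.div ((((ih hz).add continuousAt_const).sub
      continuousAt_const).add continuousAt_const) hden

lemma aux_phiMap_im (m n : ℕ) (lam : ℂ) (hlam : 0 ≤ lam.im) (q : ℕ → ℝ) {z₁ z₂ : ℂ}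
    (h₁ : 0 < z₁.im) (h₂ : 0 < z₂.im) : 0 < (phiMap m n lam q z₁ z₂).im := by
  apply aux_neg_inv_im
  simp only [Complex.add_im, Complex.sub_im, Complex.ofReal_im]
  have a1 := aux_phiIter_im lam hlam q n h₁
  have a2 := aux_phiIter_im lam hlam (fun i => q (n + i)) m h₂
  linarith

lemma aux_phiMap_diag_contAt (m n : ℕ) (lam : ℂ) (hlam : 0 ≤ lam.im) (q : ℕ → ℝ) {z : ℂ}
    (hz : 0 < z.im) : ContinuousAt (fun z => phiMap m n lam q z z) z := by
  have hden : (phiIter lam q n z + phiIter lam (fun i => q (n + i)) m z + lam - (q (n + m) : ℂ)) ≠ 0 := by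
    intro h
    have h1 : 0 < (phiIter lam q n z + phiIter lam (fun i => q (n + i)) m z + lam - (q (n + m) : ℂ)).im := by
      simp only [Complex.add_im, Complex.sub_im, Complex.ofReal_im]
      have a1 := aux_phiIter_im lam hlam q n hz
      have a2 := aux_phiIter_im lam hlam (fun i => q (n + i)) m hz
      linarith
    rw [h] at h1; simp at h1
  show ContinuousAt (fun z => -1 / (phiIter lam q n z + phiIter lam (fun i => q (n + i)) m z + lam - (q (n + m) : ℂ))) z
  exact continuousAt_const.div ((((aux_phiIter_contAt lam hlam q n hz).add
    (aux_phiIter_contAt lam hlam (fun i => q (n + i)) m hz)).add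
    continuousAt_const).sub continuousAt_const) hden

lemma aux_wt_nonneg {s z : ℂ} (hs : 0 < s.im) (hz : 0 < z.im) : 0 ≤ wt s z := by
  unfold wt; positivity

lemma aux_wt_pos {s z : ℂ} (hs : 0 < s.im) (hz : 0 < z.im) (hne : z ≠ s) : 0 < wt s z := by
  unfold wt
  apply div_pos _ (by positivity)
  exact pow_pos (norm_pos_iff.mpr (sub_ne_zero.mpr hne)) 2

lemma aux_wt_contAt {s z : ℂ} (hs : 0 < s.im) (hz : 0 < z.im) : ContinuousAt (wt s) z := by
  unfold wt
  apply ContinuousAt.div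
  · exact ((continuous_norm.comp (continuous_id.sub continuous_const)).pow 2).continuousAt
  · exact (Complex.continuous_im.continuousAt.mul continuousAt_const)
  · exact ne_of_gt (mul_pos hz hs)

lemma aux_W_contAt {s z : ℂ} (p : ℝ) (hp : 0 ≤ p) (hs : 0 < s.im) (hz : 0 < z.im) :
    ContinuousAt (fun z => ENNReal.ofReal (wt s z ^ (1 + p))) z := by
  apply (ENNReal.continuous_ofReal.continuousAt).comp
  exact (aux_wt_contAt hs hz).rpow_const (Or.inr (by linarith))

lemma aux_meas_wt (s : ℂ) : Measurable (wt s) := by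
  apply Measurable.div _ (by fun_prop)
  exact ((continuous_norm.measurable.comp
    (by fun_prop : Measurable fun z : ℂ => z - s)).pow_const 2)

lemma aux_meas_W (s : ℂ) (p : ℝ) : Measurable fun z => ENNReal.ofReal (wt s z ^ (1 + p)) := by
  apply ENNReal.measurable_ofReal.comp
  exact (by fun_prop : Measurable fun x : ℝ => x ^ (1 + p)).comp (aux_meas_wt s)

lemma aux_meas_phiIter {α : Type*} [MeasurableSpace α] (lam : ℂ) (Q : α → ℕ → ℝ)
    (hQ : ∀ i, Measurable fun a => Q a i) (j : ℕ) :
    Measurable fun x : ℂ × α => phiIter lam (Q x.2) j x.1 := by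
  induction j with
  | zero => exact measurable_fst
  | succ j ih =>
    show Measurable fun x : ℂ × α => -1 / (phiIter lam (Q x.2) j x.1 + lam - (Q x.2 j : ℂ) + 1)
    apply Measurable.div measurable_const
    apply Measurable.add _ measurable_const
    apply Measurable.sub (ih.add measurable_const)
    exact Complex.measurable_ofReal.comp ((hQ j).comp measurable_snd)

lemma aux_meas_extQ (M : ℕ) (c : ℕ → ℕ) (i : ℕ) :
    Measurable fun q : Fin M → ℝ => extQ M q (c i) := by
  unfold extQ
  by_cases h : c i < M
  · simp only [h, dif_pos]; exact measurable_pi_apply _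
  · simp only [h, dif_neg, not_false_iff]; exact measurable_const

lemma aux_meas_core (m n : ℕ) (lam s : ℂ) (p : ℝ) :
    Measurable fun x : (ℂ × ℂ) × (Fin (m + n + 1) → ℝ) =>
      ENNReal.ofReal (wt s (phiMap m n lam (extQ (m + n + 1) x.2) x.1.1 x.1.2) ^ (1 + p)) := by
  apply (aux_meas_W s p).comp
  show Measurable fun x : (ℂ × ℂ) × (Fin (m + n + 1) → ℝ) =>
    -1 / (phiIter lam (extQ (m + n + 1) x.2) n x.1.1 +
      phiIter lam (fun i => extQ (m + n + 1) x.2 (n + i)) m x.1.2 + lam -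
      (extQ (m + n + 1) x.2 (n + m) : ℂ))
  apply Measurable.div measurable_const
  apply Measurable.sub
  · apply Measurable.add _ measurable_const
    apply Measurable.add
    · exact (aux_meas_phiIter lam (fun q i => extQ (m+n+1) q i)
        (fun i => aux_meas_extQ (m+n+1) id i) n).comp
        ((measurable_fst.fst).prodMk measurable_snd)
    · exact (aux_meas_phiIter lam (fun q i => extQ (m+n+1) q (n+i))
        (fun i => aux_meas_extQ (m+n+1) (fun i => n+i) i) m).comp
        ((measurable_fst.snd).prodMk measurable_snd)
  · exact Complex.measurable_ofReal.comp ((aux_meas_extQ (m+n+1) (fun _ => n+m) 0).comp measurable_snd)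

lemma aux_meas_core_q (m n : ℕ) (lam s : ℂ) (p : ℝ) (z₁ z₂ : ℂ) :
    Measurable fun q : Fin (m + n + 1) → ℝ =>
      ENNReal.ofReal (wt s (phiMap m n lam (extQ (m + n + 1) q) z₁ z₂) ^ (1 + p)) :=
  Measurable.comp
    (g := fun x : (ℂ × ℂ) × (Fin (m + n + 1) → ℝ) =>
      ENNReal.ofReal (wt s (phiMap m n lam (extQ (m + n + 1) x.2) x.1.1 x.1.2) ^ (1 + p)))
    (f := fun q : Fin (m + n + 1) → ℝ => (((z₁, z₂) : ℂ × ℂ), q))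
    (aux_meas_core m n lam s p) measurable_prodMk_left

/-- **stationary-measure moment bound.** Let `m ≠ n`, `Im λ ≥ 0`,
`s ∈ ℍ`, `p ∈ (0,1)`, `ε ∈ (0,1)`, `ν` a Borel probability measure on `ℝ`, and
`K ⊂ ℍ×ℍ` compact.  If (i) `∫ μ_p dν^{⊗M} ≤ 1−ε` off `K`, (ii) the sup `C` over `K`
of `(1/2)∫ [w_s(φ(z₁,z₂,q,λ))^{1+p} + w_s(φ(z₂,z₁,q,λ))^{1+p}] dν^{⊗M}` is finite,
and (iii) `ρ` is a Borel probability measure on `ℍ` with finite weight moment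
satisfying the stationarity equation, then `∫ w_s^{1+p} dρ ≤ C/ε`. -/
theorem statement5 (m n : ℕ) (hmn : m ≠ n) (lam : ℂ) (hlam : 0 ≤ lam.im)
    (s : ℂ) (hs : 0 < s.im) (p ε : ℝ) (hp : 0 < p) (hp1 : p < 1)
    (hε : 0 < ε) (hε1 : ε < 1)
    (ν : Measure ℝ) [IsProbabilityMeasure ν]
    (K : Set (ℂ × ℂ)) (hK : IsCompact K)
    (hKsub : K ⊆ {z : ℂ × ℂ | 0 < z.1.im ∧ 0 < z.2.im})
    (hoffK : ∀ z₁ z₂ : ℂ, 0 < z₁.im → 0 < z₂.im → (z₁, z₂) ∉ K →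
      ∫⁻ q : Fin (m + n + 1) → ℝ,
          ENNReal.ofReal (muP m n p s lam (extQ (m + n + 1) q) z₁ z₂)
          ∂(Measure.pi fun _ => ν) ≤ ENNReal.ofReal (1 - ε))
    (C : ℝ≥0∞)
    (hC : C = ⨆ (z : ℂ × ℂ) (_ : z ∈ K),
      (1 / 2 : ℝ≥0∞) * ∫⁻ q : Fin (m + n + 1) → ℝ,
        (ENNReal.ofReal (wt s (phiMap m n lam (extQ (m + n + 1) q) z.1 z.2) ^ (1 + p)) +
         ENNReal.ofReal (wt s (phiMap m n lam (extQ (m + n + 1) q) z.2 z.1) ^ (1 + p)))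
        ∂(Measure.pi fun _ => ν))
    (hCfin : C < ⊤)
    (ρ : Measure ℂ) [IsProbabilityMeasure ρ] (hρsupp : ρ {z : ℂ | z.im ≤ 0} = 0)
    (hmom : ∫⁻ z, ENNReal.ofReal (wt s z ^ (1 + p)) ∂ρ < ⊤)
    (hstat : ∫⁻ z, ENNReal.ofReal (wt s z ^ (1 + p)) ∂ρ =
      ∫⁻ z₁, ∫⁻ z₂, ∫⁻ q : Fin (m + n + 1) → ℝ,
        ENNReal.ofReal (wt s (phiMap m n lam (extQ (m + n + 1) q) z₁ z₂) ^ (1 + p))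
        ∂(Measure.pi fun _ => ν) ∂ρ ∂ρ) :
    ∫⁻ z, ENNReal.ofReal (wt s z ^ (1 + p)) ∂ρ ≤ C / ENNReal.ofReal ε := by

  classical
  set νM : Measure (Fin (m + n + 1) → ℝ) := Measure.pi fun _ => ν with hνM
  set W : ℂ → ℝ≥0∞ := fun z => ENNReal.ofReal (wt s z ^ (1 + p)) with hWdef
  set Φ : ℂ → ℂ → (Fin (m + n + 1) → ℝ) → ℂ :=
    fun z₁ z₂ q => phiMap m n lam (extQ (m + n + 1) q) z₁ z₂ with hΦdef
  set f : ℂ → ℂ → ℝ≥0∞ := fun z₁ z₂ => ∫⁻ q, W (Φ z₁ z₂ q) ∂νM with hfdef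
  set I : ℝ≥0∞ := ∫⁻ z, ENNReal.ofReal (wt s z ^ (1 + p)) ∂ρ with hI
  -- measurability
  have hmeasW : Measurable W := aux_meas_W s p
  have hmeasCore : Measurable fun x : (ℂ × ℂ) × (Fin (m + n + 1) → ℝ) =>
      W (Φ x.1.1 x.1.2 x.2) := aux_meas_core m n lam s p
  have hmeasf2 : Measurable fun x : ℂ × ℂ => f x.1 x.2 := by
    exact Measurable.lintegral_prod_right' hmeasCore
  have hmWΦ : ∀ z₁ z₂ : ℂ, Measurable fun q : Fin (m + n + 1) → ℝ => W (Φ z₁ z₂ q) :=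
    fun z₁ z₂ => aux_meas_core_q m n lam s p z₁ z₂
  have haeim : ∀ᵐ z ∂ρ, 0 < z.im := by
    rw [ae_iff]
    have : {z : ℂ | ¬ 0 < z.im} = {z : ℂ | z.im ≤ 0} := by ext w; simp [not_lt]
    rw [this]; exact hρsupp
  have hstat' : I = ∫⁻ z₁, ∫⁻ z₂, f z₁ z₂ ∂ρ ∂ρ := hstat
  -- the key off-K estimate
  have hkey : ∀ z₁ z₂ : ℂ, 0 < z₁.im → 0 < z₂.im → (z₁, z₂) ∉ K →
      0 < wt s z₁ ^ (1 + p) + wt s z₂ ^ (1 + p) →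
      f z₁ z₂ + f z₂ z₁ ≤ ENNReal.ofReal (1 - ε) * (W z₁ + W z₂) := by
    intro z₁ z₂ h₁ h₂ hK' hD
    have hoD0 : ENNReal.ofReal (wt s z₁ ^ (1 + p) + wt s z₂ ^ (1 + p)) ≠ 0 := by
      simp only [ne_eq, ENNReal.ofReal_eq_zero, not_le]; exact hD
    have hoDt : ENNReal.ofReal (wt s z₁ ^ (1 + p) + wt s z₂ ^ (1 + p)) ≠ ⊤ :=
      ENNReal.ofReal_ne_top
    have hmu : ∀ q : Fin (m + n + 1) → ℝ,
        ENNReal.ofReal (muP m n p s lam (extQ (m + n + 1) q) z₁ z₂)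
        = (W (Φ z₁ z₂ q) + W (Φ z₂ z₁ q)) *
            (ENNReal.ofReal (wt s z₁ ^ (1 + p) + wt s z₂ ^ (1 + p)))⁻¹ := by
      intro q
      have hA : 0 ≤ wt s (Φ z₁ z₂ q) ^ (1 + p) :=
        Real.rpow_nonneg (aux_wt_nonneg hs (aux_phiMap_im m n lam hlam _ h₁ h₂)) _
      have hB : 0 ≤ wt s (Φ z₂ z₁ q) ^ (1 + p) :=
        Real.rpow_nonneg (aux_wt_nonneg hs (aux_phiMap_im m n lam hlam _ h₂ h₁)) _
      show ENNReal.ofReal ((wt s (Φ z₁ z₂ q) ^ (1 + p) + wt s (Φ z₂ z₁ q) ^ (1 + p)) /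
          (wt s z₁ ^ (1 + p) + wt s z₂ ^ (1 + p))) = _
      rw [ENNReal.ofReal_div_of_pos hD, ENNReal.ofReal_add hA hB, div_eq_mul_inv]
    have hInt : (∫⁻ q, (W (Φ z₁ z₂ q) + W (Φ z₂ z₁ q)) ∂νM) *
        (ENNReal.ofReal (wt s z₁ ^ (1 + p) + wt s z₂ ^ (1 + p)))⁻¹
        ≤ ENNReal.ofReal (1 - ε) := by
      rw [← lintegral_mul_const' _ _ (ENNReal.inv_ne_top.mpr hoD0)]
      calc ∫⁻ q, (W (Φ z₁ z₂ q) + W (Φ z₂ z₁ q)) *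
            (ENNReal.ofReal (wt s z₁ ^ (1 + p) + wt s z₂ ^ (1 + p)))⁻¹ ∂νM
          = ∫⁻ q, ENNReal.ofReal (muP m n p s lam (extQ (m + n + 1) q) z₁ z₂) ∂νM :=
            lintegral_congr fun q => (hmu q).symm
        _ ≤ ENNReal.ofReal (1 - ε) := hoffK z₁ z₂ h₁ h₂ hK'
    have hsum : (∫⁻ q, (W (Φ z₁ z₂ q) + W (Φ z₂ z₁ q)) ∂νM) = f z₁ z₂ + f z₂ z₁ :=
      lintegral_add_left (hmWΦ z₁ z₂) _
    calc f z₁ z₂ + f z₂ z₁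
        = ((f z₁ z₂ + f z₂ z₁) *
            (ENNReal.ofReal (wt s z₁ ^ (1 + p) + wt s z₂ ^ (1 + p)))⁻¹) *
            ENNReal.ofReal (wt s z₁ ^ (1 + p) + wt s z₂ ^ (1 + p)) := by
          rw [mul_assoc, ENNReal.inv_mul_cancel hoD0 hoDt, mul_one]
      _ ≤ ENNReal.ofReal (1 - ε) *
            ENNReal.ofReal (wt s z₁ ^ (1 + p) + wt s z₂ ^ (1 + p)) := by
          apply mul_le_mul_left
          rw [← hsum]; exact hInt
      _ = ENNReal.ofReal (1 - ε) * (W z₁ + W z₂) := by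
          rw [ENNReal.ofReal_add (Real.rpow_nonneg (aux_wt_nonneg hs h₁) _)
            (Real.rpow_nonneg (aux_wt_nonneg hs h₂) _)]
  -- the singular point (s,s)
  have hfss : (s, s) ∉ K → f s s = 0 := by
    intro hss
    obtain ⟨r, hr, hball⟩ := Metric.isOpen_iff.1 hK.isClosed.isOpen_compl (s, s) hss
    set u : ℕ → ℝ := fun k => r / 2 * (1 / ((k : ℝ) + 1)) with hu
    have hu0 : ∀ k, 0 < u k := fun k => by positivity
    have hur : ∀ k, u k < r := by
      intro k
      have h1 : (1 : ℝ) / ((k : ℝ) + 1) ≤ 1 := by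
        rw [div_le_one (by positivity)]; linarith [Nat.cast_nonneg (α := ℝ) k]
      have : u k ≤ r / 2 := by
        rw [hu]
        calc r / 2 * (1 / ((k : ℝ) + 1)) ≤ r / 2 * 1 :=
          mul_le_mul_of_nonneg_left h1 (by positivity)
        _ = r / 2 := mul_one _
      linarith
    set z : ℕ → ℂ := fun k => s + (u k : ℂ) * Complex.I with hz
    have hzim : ∀ k, (z k).im = s.im + u k := by
      intro k; simp [hz, Complex.add_im, Complex.mul_im]
    have hzim' : ∀ k, 0 < (z k).im := fun k => by rw [hzim k]; linarith [hu0 k]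
    have hzs : ∀ k, z k - s = (u k : ℂ) * Complex.I := fun k => by rw [hz]; ring
    have hdist : ∀ k, dist (z k) s = u k := by
      intro k
      rw [Complex.dist_eq, hzs k]
      rw [norm_mul]
      simp [abs_of_pos (hu0 k)]
    have hnotK : ∀ k, (z k, z k) ∉ K := by
      intro k
      have : (z k, z k) ∈ Metric.ball ((s : ℂ), (s : ℂ)) r := by
        rw [Metric.mem_ball, Prod.dist_eq]
        simp only [max_self]
        rw [hdist k]; exact hur k
      exact hball this
    have htendu : Filter.Tendsto u atTop (nhds 0) := by
      have h0 := tendsto_one_div_add_atTop_nhds_zero_nat (𝕜 := ℝ)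
      have := h0.const_mul (r / 2)
      simpa [hu] using this
    have htendz : Filter.Tendsto z atTop (nhds s) := by
      have h1 : Filter.Tendsto (fun k => ((u k : ℝ) : ℂ)) atTop (nhds ((0 : ℝ) : ℂ)) :=
        (Complex.continuous_ofReal.tendsto 0).comp htendu
      have h2 : Filter.Tendsto z atTop (nhds (s + ((0 : ℝ) : ℂ) * Complex.I)) :=
        tendsto_const_nhds.add (h1.mul_const _)
      simpa using h2
    have hWs : W s = 0 := by
      have hwts : wt s s = 0 := by simp [wt]
      rw [hWdef]
      simp only [hwts]
      rw [Real.zero_rpow (by linarith : (1 : ℝ) + p ≠ 0)]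
      simp
    have hWz : Filter.Tendsto (fun k => W (z k)) atTop (nhds 0) := by
      have h := ((aux_W_contAt p hp.le hs hs).tendsto).comp htendz
      have hWs0 : ENNReal.ofReal (wt s s ^ (1 + p)) = 0 := hWs
      rw [hWs0] at h
      exact h
    have hfk : ∀ k, f (z k) (z k) ≤ ENNReal.ofReal (1 - ε) * W (z k) := by
      intro k
      have hDk : 0 < wt s (z k) ^ (1 + p) + wt s (z k) ^ (1 + p) := by
        have hne : z k ≠ s := by
          intro h
          have := hzs k
          rw [h, sub_self] at this
          have : (u k : ℂ) * Complex.I = 0 := this.symm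
          simp [Complex.ext_iff, Complex.I_re, Complex.I_im] at this
          exact absurd this (ne_of_gt (hu0 k))
        have := Real.rpow_pos_of_pos (aux_wt_pos hs (hzim' k) hne) (1 + p)
        linarith
      have h2 := hkey (z k) (z k) (hzim' k) (hzim' k) (hnotK k) hDk
      have h3 : 2 * f (z k) (z k) ≤ 2 * (ENNReal.ofReal (1 - ε) * W (z k)) := by
        calc 2 * f (z k) (z k) = f (z k) (z k) + f (z k) (z k) := two_mul _
          _ ≤ ENNReal.ofReal (1 - ε) * (W (z k) + W (z k)) := h2
          _ = 2 * (ENNReal.ofReal (1 - ε) * W (z k)) := by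
              rw [← two_mul]; ring
      exact (ENNReal.mul_le_mul_iff_right (by norm_num) (by norm_num)).mp h3
    have ht0 : Filter.Tendsto (fun k => ENNReal.ofReal (1 - ε) * W (z k)) atTop (nhds 0) := by
      have h := ENNReal.Tendsto.const_mul (a := ENNReal.ofReal (1 - ε)) hWz
        (Or.inr ENNReal.ofReal_ne_top)
      simpa using h
    have hfss' : f s s ≤ 0 := by
      have hpt : ∀ q : Fin (m + n + 1) → ℝ,
          W (Φ s s q) = Filter.liminf (fun k => W (Φ (z k) (z k) q)) atTop := by
        intro q
        have hc : Filter.Tendsto (fun k => Φ (z k) (z k) q) atTop (nhds (Φ s s q)) :=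
          ((aux_phiMap_diag_contAt m n lam hlam (extQ _ q) hs).tendsto).comp htendz
        have hc2 : Filter.Tendsto (fun k => W (Φ (z k) (z k) q)) atTop
            (nhds (W (Φ s s q))) :=
          ((aux_W_contAt p hp.le hs (aux_phiMap_im m n lam hlam _ hs hs)).tendsto).comp hc
        exact hc2.liminf_eq.symm
      calc f s s = ∫⁻ q, Filter.liminf (fun k => W (Φ (z k) (z k) q)) atTop ∂νM :=
            lintegral_congr hpt
        _ ≤ Filter.liminf (fun k => f (z k) (z k)) atTop :=
            lintegral_liminf_le fun k => hmWΦ (z k) (z k)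
        _ ≤ Filter.liminf (fun k => ENNReal.ofReal (1 - ε) * W (z k)) atTop :=
            Filter.liminf_le_liminf (Filter.Eventually.of_forall hfk)
        _ = 0 := ht0.liminf_eq
    exact le_antisymm hfss' zero_le
  -- on K
  have hCbound : ∀ z₁ z₂ : ℂ, (z₁, z₂) ∈ K → f z₁ z₂ + f z₂ z₁ ≤ 2 * C := by
    intro z₁ z₂ hmem
    have hle : (1 / 2 : ℝ≥0∞) * ∫⁻ q, (W (Φ z₁ z₂ q) + W (Φ z₂ z₁ q)) ∂νM ≤ C := by
      rw [hC]
      exact le_iSup₂ (f := fun (z : ℂ × ℂ) (_ : z ∈ K) =>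
        (1 / 2 : ℝ≥0∞) * ∫⁻ q, (ENNReal.ofReal
            (wt s (phiMap m n lam (extQ (m + n + 1) q) z.1 z.2) ^ (1 + p)) +
          ENNReal.ofReal
            (wt s (phiMap m n lam (extQ (m + n + 1) q) z.2 z.1) ^ (1 + p))) ∂νM)
        (z₁, z₂) hmem
    have hadd : (∫⁻ q, (W (Φ z₁ z₂ q) + W (Φ z₂ z₁ q)) ∂νM) = f z₁ z₂ + f z₂ z₁ :=
      lintegral_add_left (hmWΦ z₁ z₂) _
    rw [hadd] at hle
    calc f z₁ z₂ + f z₂ z₁ = 2 * ((1 / 2 : ℝ≥0∞) * (f z₁ z₂ + f z₂ z₁)) := by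
          rw [← mul_assoc, show (2 : ℝ≥0∞) * (1 / 2) = 1 by
            rw [one_div, ENNReal.mul_inv_cancel (by norm_num) (by norm_num)], one_mul]
      _ ≤ 2 * C := mul_le_mul_right hle 2
  -- pointwise bound
  have hpt : ∀ z₁ z₂ : ℂ, 0 < z₁.im → 0 < z₂.im →
      f z₁ z₂ + f z₂ z₁ ≤ 2 * Set.indicator K (fun _ => C) (z₁, z₂)
        + ENNReal.ofReal (1 - ε) * (W z₁ + W z₂) := by
    intro z₁ z₂ h₁ h₂
    by_cases hmem : (z₁, z₂) ∈ K
    · rw [Set.indicator_of_mem hmem]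
      exact le_trans (hCbound z₁ z₂ hmem) le_self_add
    · rw [Set.indicator_of_notMem hmem]
      simp only [mul_zero, zero_add]
      have hDnn : 0 ≤ wt s z₁ ^ (1 + p) + wt s z₂ ^ (1 + p) :=
        add_nonneg (Real.rpow_nonneg (aux_wt_nonneg hs h₁) _)
          (Real.rpow_nonneg (aux_wt_nonneg hs h₂) _)
      rcases eq_or_lt_of_le hDnn with hD | hD
      · -- both weights vanish: z₁ = z₂ = s
        have hz₁ : z₁ = s := by
          by_contra hne
          have h := Real.rpow_pos_of_pos (aux_wt_pos hs h₁ hne) (1 + p)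
          have h2 := Real.rpow_nonneg (aux_wt_nonneg hs h₂) (1 + p)
          linarith [hD.symm]
        have hz₂ : z₂ = s := by
          by_contra hne
          have h := Real.rpow_pos_of_pos (aux_wt_pos hs h₂ hne) (1 + p)
          have h2 := Real.rpow_nonneg (aux_wt_nonneg hs h₁) (1 + p)
          linarith [hD.symm]
        subst hz₁; subst hz₂
        rw [hfss hmem]
        simp
      · exact hkey z₁ z₂ h₁ h₂ hmem hD
  -- swap identity
  have hswap : ∫⁻ z₁, ∫⁻ z₂, f z₂ z₁ ∂ρ ∂ρ = I := by
    calc ∫⁻ z₁, ∫⁻ z₂, f z₂ z₁ ∂ρ ∂ρ = ∫⁻ z₂, ∫⁻ z₁, f z₂ z₁ ∂ρ ∂ρ :=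
          lintegral_lintegral_swap ((hmeasf2.comp measurable_swap).aemeasurable)
      _ = I := hstat'.symm
  have hmeas_fz : ∀ z₁ : ℂ, Measurable fun z₂ => f z₁ z₂ := fun z₁ =>
    Measurable.comp (g := fun x : ℂ × ℂ => f x.1 x.2) (f := fun z₂ => (z₁, z₂))
      hmeasf2 measurable_prodMk_left
  have h2I : ∫⁻ z₁, ∫⁻ z₂, (f z₁ z₂ + f z₂ z₁) ∂ρ ∂ρ = I + I := by
    have hin : ∀ z₁, ∫⁻ z₂, (f z₁ z₂ + f z₂ z₁) ∂ρ
        = (∫⁻ z₂, f z₁ z₂ ∂ρ) + ∫⁻ z₂, f z₂ z₁ ∂ρ :=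
      fun z₁ => lintegral_add_left (hmeas_fz z₁) _
    rw [lintegral_congr hin, lintegral_add_left (Measurable.lintegral_prod_right' hmeasf2),
      ← hstat', hswap]
  -- main comparison
  have hmono : I + I ≤ 2 * C + ENNReal.ofReal (1 - ε) * (I + I) := by
    have step1 : ∫⁻ z₁, ∫⁻ z₂, (f z₁ z₂ + f z₂ z₁) ∂ρ ∂ρ
        ≤ ∫⁻ z₁, ∫⁻ z₂, (2 * Set.indicator K (fun _ => C) (z₁, z₂)
            + ENNReal.ofReal (1 - ε) * (W z₁ + W z₂)) ∂ρ ∂ρ := by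
      apply lintegral_mono_ae
      filter_upwards [haeim] with z₁ h₁
      apply lintegral_mono_ae
      filter_upwards [haeim] with z₂ h₂
      exact hpt z₁ z₂ h₁ h₂
    have step2 : ∀ z₁ : ℂ, ∫⁻ z₂, (2 * Set.indicator K (fun _ => C) (z₁, z₂)
            + ENNReal.ofReal (1 - ε) * (W z₁ + W z₂)) ∂ρ
        ≤ 2 * C + ENNReal.ofReal (1 - ε) * (W z₁ + I) := by
      intro z₁
      have hb : ∀ z₂ : ℂ, (2 * Set.indicator K (fun _ => C) (z₁, z₂)
            + ENNReal.ofReal (1 - ε) * (W z₁ + W z₂))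
          ≤ (fun z₂ => 2 * C + ENNReal.ofReal (1 - ε) * (W z₁ + W z₂)) z₂ := by
        intro z₂
        refine add_le_add ?_ le_rfl
        exact mul_le_mul_right (Set.indicator_le_self K (fun _ => C) (z₁, z₂)) 2
      calc ∫⁻ z₂, (2 * Set.indicator K (fun _ => C) (z₁, z₂)
            + ENNReal.ofReal (1 - ε) * (W z₁ + W z₂)) ∂ρ
          ≤ ∫⁻ z₂, (2 * C + ENNReal.ofReal (1 - ε) * (W z₁ + W z₂)) ∂ρ := lintegral_mono hb
        _ = 2 * C + ENNReal.ofReal (1 - ε) * (W z₁ + I) := by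
            rw [lintegral_add_left measurable_const, lintegral_const, measure_univ, mul_one,
              lintegral_const_mul' _ _ ENNReal.ofReal_ne_top,
              lintegral_add_left measurable_const, lintegral_const, measure_univ, mul_one]
    calc I + I = ∫⁻ z₁, ∫⁻ z₂, (f z₁ z₂ + f z₂ z₁) ∂ρ ∂ρ := h2I.symm
      _ ≤ ∫⁻ z₁, ∫⁻ z₂, (2 * Set.indicator K (fun _ => C) (z₁, z₂)
            + ENNReal.ofReal (1 - ε) * (W z₁ + W z₂)) ∂ρ ∂ρ := step1
      _ ≤ ∫⁻ z₁, (2 * C + ENNReal.ofReal (1 - ε) * (W z₁ + I)) ∂ρ := lintegral_mono step2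
      _ = 2 * C + ENNReal.ofReal (1 - ε) * (I + I) := by
          rw [lintegral_add_left measurable_const, lintegral_const, measure_univ, mul_one,
            lintegral_const_mul' _ _ ENNReal.ofReal_ne_top,
            lintegral_add_right _ measurable_const, lintegral_const, measure_univ, mul_one]
  -- final arithmetic
  have hIne : I ≠ ⊤ := hmom.ne
  have hone : ENNReal.ofReal ε + ENNReal.ofReal (1 - ε) = 1 := by
    rw [← ENNReal.ofReal_add hε.le (by linarith)]
    norm_num
  have hsplit : I = ENNReal.ofReal ε * I + ENNReal.ofReal (1 - ε) * I := by
    rw [← add_mul, hone, one_mul]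
  have hbne : ENNReal.ofReal (1 - ε) * I + ENNReal.ofReal (1 - ε) * I ≠ ⊤ := by
    exact ENNReal.add_ne_top.mpr ⟨ENNReal.mul_ne_top ENNReal.ofReal_ne_top hIne,
      ENNReal.mul_ne_top ENNReal.ofReal_ne_top hIne⟩
  have h3 : ENNReal.ofReal ε * I + ENNReal.ofReal ε * I
      + (ENNReal.ofReal (1 - ε) * I + ENNReal.ofReal (1 - ε) * I)
      ≤ 2 * C + (ENNReal.ofReal (1 - ε) * I + ENNReal.ofReal (1 - ε) * I) := by
    calc ENNReal.ofReal ε * I + ENNReal.ofReal ε * I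
          + (ENNReal.ofReal (1 - ε) * I + ENNReal.ofReal (1 - ε) * I)
        = I + I := by rw [add_add_add_comm, ← hsplit]
      _ ≤ 2 * C + ENNReal.ofReal (1 - ε) * (I + I) := hmono
      _ = 2 * C + (ENNReal.ofReal (1 - ε) * I + ENNReal.ofReal (1 - ε) * I) := by
          rw [mul_add]
  have h4 : ENNReal.ofReal ε * I + ENNReal.ofReal ε * I ≤ 2 * C :=
    (ENNReal.add_le_add_iff_right hbne).mp h3
  have h5 : ENNReal.ofReal ε * I ≤ C := by
    have : 2 * (ENNReal.ofReal ε * I) ≤ 2 * C := by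
      rw [two_mul]; exact h4
    exact (ENNReal.mul_le_mul_iff_right (by norm_num) (by norm_num)).mp this
  rw [ENNReal.le_div_iff_mul_le (Or.inl (by simp [hε] : ENNReal.ofReal ε ≠ 0))
    (Or.inl ENNReal.ofReal_ne_top)]
  rw [mul_comm]
  exact h5

end
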